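/- Let f : ℝⁿ → ℝ be differentiable with L-Lipschitz gradient and bounded below by f*. Gradient descent with constant step size 1/L starting at x₀ produces, within at most ⌈2L(f(x₀) - f*)/ε²⌉ steps, an iterate xₜ with ‖∇f(xₜ)‖ < ε. -/

import Mathlib

open intervalIntegral in
lemma descent_lemma {n : ℕ} (f : EuclideanSpace ℝ (Fin n) → ℝ) (hf : Differentiable ℝ f)
    (L : ℝ) (hL : 0 < L)
    (hlip : ∀ x y, ‖gradient f x - gradient f y‖ ≤ L * ‖x - y‖)
    (x y : EuclideanSpace ℝ (Fin n)) :
    f y ≤ f x + inner ℝ (gradient f x) (y - x) + L / 2 * ‖y - x‖ ^ 2 := by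
  set v := y - x with hv
  have hgl : LipschitzWith (Real.toNNReal L) (gradient f) := by
    apply LipschitzWith.of_dist_le_mul
    intro a b
    rw [dist_eq_norm, dist_eq_norm, Real.coe_toNNReal L hL.le]
    exact hlip a b
  have hc : ∀ t : ℝ, HasDerivAt (fun t : ℝ => x + t • v) v t := by
    intro t
    simpa using ((hasDerivAt_id t).smul_const v).const_add x
  have hφ : ∀ t : ℝ, HasDerivAt (fun t : ℝ => f (x + t • v))
      (inner ℝ (gradient f (x + t • v)) v : ℝ) t := by
    intro t
    have hg := (hf (x + t • v)).hasGradientAt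
    have := hg.hasFDerivAt.comp_hasDerivAt t (hc t)
    exact this.congr_deriv rfl
  have hcont : Continuous fun t : ℝ => (inner ℝ (gradient f (x + t • v)) v : ℝ) := by
    exact (hgl.continuous.comp
      (continuous_const.add (continuous_id.smul continuous_const))).inner continuous_const
  have key : f y - f x = ∫ t in (0:ℝ)..1, (inner ℝ (gradient f (x + t • v)) v : ℝ) := by
    have h := intervalIntegral.integral_eq_sub_of_hasDerivAt
      (f := fun t : ℝ => f (x + t • v)) (fun t _ => hφ t)
      (hcont.intervalIntegrable 0 1)
    rw [h]; simp [hv]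
  have hb : ∀ t ∈ Set.Icc (0:ℝ) 1,
      (inner ℝ (gradient f (x + t • v)) v : ℝ) ≤ inner ℝ (gradient f x) v + L * t * ‖v‖ ^ 2 := by
    intro t ht
    have h1 : (inner ℝ (gradient f (x + t • v)) v : ℝ) - inner ℝ (gradient f x) v
        = inner ℝ (gradient f (x + t • v) - gradient f x) v := (inner_sub_left _ _ _).symm
    have h2 : (inner ℝ (gradient f (x + t • v) - gradient f x) v : ℝ)
        ≤ ‖gradient f (x + t • v) - gradient f x‖ * ‖v‖ := real_inner_le_norm _ _
    have h3 : ‖gradient f (x + t • v) - gradient f x‖ ≤ L * (t * ‖v‖) := by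
      have := hlip (x + t • v) x
      simpa [norm_smul, abs_of_nonneg ht.1] using this
    have hnv : (0:ℝ) ≤ ‖v‖ := norm_nonneg _
    nlinarith [mul_le_mul_of_nonneg_right h3 hnv]
  have hint : (∫ t in (0:ℝ)..1, (inner ℝ (gradient f (x + t • v)) v : ℝ))
      ≤ ∫ t in (0:ℝ)..1, (inner ℝ (gradient f x) v + L * t * ‖v‖ ^ 2 : ℝ) := by
    apply intervalIntegral.integral_mono_on zero_le_one
      (hcont.intervalIntegrable 0 1)
      ((by fun_prop : Continuous fun t : ℝ => inner ℝ (gradient f x) v + L * t * ‖v‖ ^ 2).intervalIntegrable 0 1) hb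
  have hval : (∫ t in (0:ℝ)..1, (inner ℝ (gradient f x) v + L * t * ‖v‖ ^ 2 : ℝ))
      = inner ℝ (gradient f x) v + L / 2 * ‖v‖ ^ 2 := by
    rw [intervalIntegral.integral_add (intervalIntegrable_const)
      ((by fun_prop : Continuous fun t : ℝ => L * t * ‖v‖ ^ 2).intervalIntegrable 0 1)]
    simp only [intervalIntegral.integral_const]
    have : (∫ t in (0:ℝ)..1, L * t * ‖v‖ ^ 2) = L * (1/2) * ‖v‖ ^ 2 := by
      have : (fun t : ℝ => L * t * ‖v‖ ^ 2) = fun t : ℝ => (L * ‖v‖ ^ 2) * t := by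
        ext t; ring
      rw [this, intervalIntegral.integral_const_mul, integral_id]
      ring
    rw [this]
    norm_num
    exact Or.inl (by ring)
  linarith [key ▸ le_trans hint (le_of_eq hval)]

lemma step_decrease {n : ℕ} (f : EuclideanSpace ℝ (Fin n) → ℝ) (hf : Differentiable ℝ f)
    (L : ℝ) (hL : 0 < L)
    (hlip : ∀ x y, ‖gradient f x - gradient f y‖ ≤ L * ‖x - y‖)
    (x : EuclideanSpace ℝ (Fin n)) :
    f (x - (1 / L) • gradient f x) ≤ f x - ‖gradient f x‖ ^ 2 / (2 * L) := by
  set g := gradient f x with hg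
  have h := descent_lemma f hf L hL hlip x (x - (1 / L) • g)
  have hd : x - (1 / L) • g - x = -((1 / L) • g) := by abel
  rw [hd] at h
  have h1 : (inner ℝ g (-((1 / L) • g)) : ℝ) = -(1 / L) * ‖g‖ ^ 2 := by
    rw [inner_neg_right, real_inner_smul_right, real_inner_self_eq_norm_sq]
    ring
  have h2 : ‖-((1 / L) • g)‖ ^ 2 = (1 / L) ^ 2 * ‖g‖ ^ 2 := by
    have hn : ‖(1 / L : ℝ)‖ = 1 / L := by
      rw [Real.norm_eq_abs, abs_of_nonneg (by positivity)]
    rw [norm_neg, norm_smul, hn]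
    ring
  rw [h1, h2] at h
  have : f x + -(1 / L) * ‖g‖ ^ 2 + L / 2 * ((1 / L) ^ 2 * ‖g‖ ^ 2)
      = f x - ‖g‖ ^ 2 / (2 * L) := by
    field_simp
    ring
  linarith [this ▸ h]

/-- Convergence of gradient descent for a function with `L`-Lipschitz gradient
bounded below: with step size `1/L`, within `⌈2L(f(x₀) - f*)/ε²⌉` steps some
iterate has gradient of norm less than `ε`. -/
theorem gradient_descent_convergence
    {n : ℕ} (f : EuclideanSpace ℝ (Fin n) → ℝ) (hf : Differentiable ℝ f)
    (L : ℝ) (hL : 0 < L)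
    (hlip : ∀ x y, ‖gradient f x - gradient f y‖ ≤ L * ‖x - y‖)
    (fstar : ℝ) (hbound : ∀ x, fstar ≤ f x)
    (x : ℕ → EuclideanSpace ℝ (Fin n))
    (hiter : ∀ k, x (k + 1) = x k - (1 / L) • gradient f (x k))
    (ε : ℝ) (hε : 0 < ε) :
    ∃ t ≤ ⌈2 * L * (f (x 0) - fstar) / ε ^ 2⌉₊, ‖gradient f (x t)‖ < ε := by
  by_contra hcon
  push_neg at hcon
  set N := ⌈2 * L * (f (x 0) - fstar) / ε ^ 2⌉₊ with hN
  have hdec : ∀ k ≤ N, f (x (k + 1)) ≤ f (x k) - ε ^ 2 / (2 * L) := by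
    intro k hk
    have h1 := step_decrease f hf L hL hlip (x k)
    rw [← hiter k] at h1
    have h2 : ε ≤ ‖gradient f (x k)‖ := hcon k hk
    have h3 : ε ^ 2 ≤ ‖gradient f (x k)‖ ^ 2 := by nlinarith
    have h4 : ε ^ 2 / (2 * L) ≤ ‖gradient f (x k)‖ ^ 2 / (2 * L) := by gcongr
    linarith
  have hsum : ∀ k ≤ N + 1, f (x k) ≤ f (x 0) - k * (ε ^ 2 / (2 * L)) := by
    intro k hk
    induction k with
    | zero => simp
    | succ m ih =>
      have hm : m ≤ N := Nat.lt_succ_iff.mp hk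
      have := hdec m hm
      have := ih (le_trans (Nat.le_succ m) hk)
      push_cast
      linarith
  have h1 := hsum (N + 1) le_rfl
  have h2 := hbound (x (N + 1))
  have h3 : 2 * L * (f (x 0) - fstar) / ε ^ 2 ≤ (N : ℝ) := Nat.le_ceil _
  have h4 : 2 * L * (f (x 0) - fstar) ≤ N * ε ^ 2 := by
    rw [div_le_iff₀ (by positivity)] at h3
    linarith
  have h5 : (0:ℝ) < 2 * L := by linarith
  push_cast at h1
  have h6 : ((N:ℝ) + 1) * (ε ^ 2 / (2 * L)) ≤ f (x 0) - fstar := by linarith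
  have h7 : ((N:ℝ) + 1) * ε ^ 2 ≤ 2 * L * (f (x 0) - fstar) := by
    calc ((N:ℝ) + 1) * ε ^ 2 = 2 * L * (((N:ℝ) + 1) * (ε ^ 2 / (2 * L))) := by
          field_simp
      _ ≤ 2 * L * (f (x 0) - fstar) := by
          exact mul_le_mul_of_nonneg_left h6 h5.le
  nlinarith [pow_pos hε 2]
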